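/- Let z be a real random variable with mean 0 and variance σ² > 0 and E[|z|³] < ∞. Then there exists a random variable z* such that for all Lipschitz (hence a.e. differentiable with bounded derivative) functions f: ℝ → ℝ, E[z f(z)] = σ² E[f'(z*)]. -/

import Mathlib

open MeasureTheory ProbabilityTheory

open Set Filter
open scoped NNReal ENNReal

lemma lip_deriv_le {f : ℝ → ℝ} {K : NNReal} (hf : LipschitzWith K f) (t : ℝ) :
    |deriv f t| ≤ K := by
  by_cases h : DifferentiableAt ℝ f t
  · have h2 := hasDerivAt_iff_tendsto_slope.1 h.hasDerivAt
    have h3 : Filter.Tendsto (fun y => |slope f t y|) (nhdsWithin t {t}ᶜ) (nhds |deriv f t|) :=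
      h2.abs
    refine le_of_tendsto h3 ?_
    filter_upwards [self_mem_nhdsWithin] with y hy
    have hyt : y - t ≠ 0 := sub_ne_zero.2 hy
    rw [slope_def_field, abs_div]
    rw [div_le_iff₀ (abs_pos.2 hyt)]
    have := hf.dist_le_mul y t
    simpa [Real.dist_eq, abs_sub_comm] using this
  · rw [deriv_zero_of_not_differentiableAt h]
    simp

lemma lipschitz_integral_deriv {f : ℝ → ℝ} {K : NNReal} (hf : LipschitzWith K f)
    {a b : ℝ} (hab : a ≤ b) :
    ∫ t in Set.Ioc a b, deriv f t = f b - f a := by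
  have hfc : Continuous f := hf.continuous
  have hKd : ∀ x y : ℝ, x ≤ y → |f y - f x| ≤ K * (y - x) := by
    intro x y hxy
    have := hf.dist_le_mul y x
    rw [Real.dist_eq, Real.dist_eq] at this
    calc |f y - f x| ≤ K * |y - x| := this
    _ = K * (y - x) := by rw [abs_of_nonneg (sub_nonneg.2 hxy)]
  have hgmono : Monotone (fun x => f x + K * x) := by
    intro x y hxy
    have := (abs_le.1 (hKd x y hxy)).1
    dsimp; nlinarith
  have hhmono : Monotone (fun x => (K : ℝ) * x - f x) := by
    intro x y hxy
    have := (abs_le.1 (hKd x y hxy)).2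
    dsimp; nlinarith
  set G : StieltjesFunction ℝ :=
    ⟨fun x => f x + K * x, hgmono, fun x =>
      ((hfc.add (continuous_const.mul continuous_id)).continuousWithinAt)⟩ with hGdef
  set H : StieltjesFunction ℝ :=
    ⟨fun x => (K : ℝ) * x - f x, hhmono, fun x =>
      (((continuous_const.mul continuous_id).sub hfc).continuousWithinAt)⟩ with hHdef
  have hsum : G.measure + H.measure = ((2 * K : ℝ≥0) : ℝ≥0∞) • volume := by
    refine MeasureTheory.Measure.ext_of_Ioc' _ _ (fun x y hxy => ?_) (fun x y hxy => ?_)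
    · simp [Measure.add_apply, StieltjesFunction.measure_Ioc, ENNReal.add_ne_top]
    simp only [Measure.add_apply, StieltjesFunction.measure_Ioc, Measure.smul_apply,
      Real.volume_Ioc, smul_eq_mul]
    rw [← ENNReal.ofReal_add (sub_nonneg.2 (hgmono hxy.le)) (sub_nonneg.2 (hhmono hxy.le))]
    rw [← ENNReal.ofReal_coe_nnreal, ← ENNReal.ofReal_mul (by positivity)]
    congr 1
    show f y + (K:ℝ) * y - (f x + (K:ℝ) * x) + ((K:ℝ) * y - f y - ((K:ℝ) * x - f x)) = ((2 * K : NNReal):ℝ) * (y - x)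
    push_cast
    ring
  have hle : G.measure ≤ ((2 * K : ℝ≥0) : ℝ≥0∞) • volume := by
    rw [← hsum]; exact Measure.le_add_right le_rfl
  have hac : G.measure ≪ volume := Measure.absolutelyContinuous_of_le_smul hle
  set d : ℝ → ℝ≥0∞ := G.measure.rnDeriv volume with hd
  have hGd : volume.withDensity d = G.measure := Measure.withDensity_rnDeriv_eq _ _ hac
  have hlint : ∫⁻ t in Set.Ioc a b, d t = ENNReal.ofReal (G b - G a) := by
    rw [← StieltjesFunction.measure_Ioc, ← hGd, withDensity_apply _ measurableSet_Ioc]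
  have hdint : Integrable (fun t => (d t).toReal) (volume.restrict (Set.Ioc a b)) := by
    refine integrable_toReal_of_lintegral_ne_top
      (Measure.measurable_rnDeriv _ _).aemeasurable ?_
    rw [hlint]; exact ENNReal.ofReal_ne_top
  have hint : ∫ t in Set.Ioc a b, (d t).toReal = G b - G a := by
    rw [integral_toReal (Measure.measurable_rnDeriv _ _).aemeasurable
      (ae_restrict_of_ae (Measure.rnDeriv_lt_top _ _)), hlint,
      ENNReal.toReal_ofReal (sub_nonneg.2 (G.mono hab))]
  have hderiv : ∀ᵐ t, deriv f t = (d t).toReal - K := by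
    filter_upwards [G.ae_hasDerivAt] with t ht
    have hft : HasDerivAt f ((d t).toReal - K) t := by
      have h2 : HasDerivAt (fun x => (K : ℝ) * x) (K : ℝ) t := by
        simpa using (hasDerivAt_id t).const_mul (K : ℝ)
      have := ht.sub h2
      refine this.congr_of_eventuallyEq ?_
      filter_upwards with x
      show f x = G x - K * x
      show f x = (f x + (K:ℝ) * x) - K * x; ring
    exact hft.deriv
  calc ∫ t in Set.Ioc a b, deriv f t = ∫ t in Set.Ioc a b, ((d t).toReal - K) :=
        integral_congr_ae (ae_restrict_of_ae hderiv)
    _ = (∫ t in Set.Ioc a b, (d t).toReal) - ∫ t in Set.Ioc a b, (K : ℝ) :=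
        integral_sub hdint (integrable_const _)
    _ = (G b - G a) - (b - a) * K := by
        rw [hint, setIntegral_const, Real.volume_real_Ioc_of_le hab, smul_eq_mul]
    _ = f b - f a := by show (f b + (K:ℝ) * b) - (f a + (K:ℝ) * a) - _ = _; ring

/-- auxiliary kernel: `ψ z t = z * (1_{[0,z)}(t) - 1_{[z,0)}(t))`, the "zero-bias layer". -/
noncomputable def zbK (z t : ℝ) : ℝ :=
  z * ((Set.Ico (0:ℝ) z).indicator 1 t - (Set.Ico z (0:ℝ)).indicator 1 t)

lemma zbK_nonneg (z t : ℝ) : 0 ≤ zbK z t := by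
  rw [zbK]
  by_cases h1 : t ∈ Set.Ico (0:ℝ) z <;> by_cases h2 : t ∈ Set.Ico z (0:ℝ)
  · exact absurd h2.2 (not_lt.2 h1.1)
  · rw [Set.indicator_of_mem h1, Set.indicator_of_notMem h2]
    obtain ⟨ha, hb⟩ := h1; simp only [Pi.one_apply, sub_zero, mul_one]; linarith
  · rw [Set.indicator_of_notMem h1, Set.indicator_of_mem h2]
    obtain ⟨ha, hb⟩ := h2; simp only [Pi.one_apply, zero_sub, mul_neg, mul_one]; nlinarith
  · rw [Set.indicator_of_notMem h1, Set.indicator_of_notMem h2]; simp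

lemma zbK_integrable (z : ℝ) : Integrable (zbK z) := by
  unfold zbK
  show Integrable (fun t => z * ((Set.Ico (0:ℝ) z).indicator 1 t - (Set.Ico z (0:ℝ)).indicator 1 t))
  refine Integrable.const_mul (Integrable.sub ?_ ?_) z <;>
    · rw [integrable_indicator_iff measurableSet_Ico]
      exact integrableOn_const (by rw [Real.volume_Ico]; exact ENNReal.ofReal_ne_top)

lemma zbK_integral (z : ℝ) : ∫ t, zbK z t = z ^ 2 := by
  have h : ∀ (a b : ℝ), ∫ t, (Set.Ico a b).indicator (1 : ℝ → ℝ) t = max (b - a) 0 := by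
    intro a b
    rcases le_or_gt b a with hba | hab
    · rw [Set.Ico_eq_empty (not_lt.2 hba), max_eq_right (by linarith)]
      simp
    · rw [integral_indicator measurableSet_Ico]
      simp only [Pi.one_apply]
      rw [setIntegral_const, Real.volume_real_Ico_of_le (by linarith), smul_eq_mul, mul_one, max_eq_left (by linarith)]
  show (∫ t, z * ((Set.Ico (0:ℝ) z).indicator 1 t - (Set.Ico z (0:ℝ)).indicator 1 t)) = z ^ 2
  rw [integral_const_mul, integral_sub, h, h]
  · rcases le_or_gt z 0 with hz | hz
    · rw [max_eq_right (by linarith), max_eq_left (by linarith)]; ring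
    · rw [max_eq_left (by linarith), max_eq_right (by linarith)]; ring
  all_goals
    rw [integrable_indicator_iff measurableSet_Ico]
    exact integrableOn_const (by rw [Real.volume_Ico]; exact ENNReal.ofReal_ne_top)

lemma zbK_deriv_integral {f : ℝ → ℝ} {K : NNReal} (hf : LipschitzWith K f) (z : ℝ) :
    ∫ t, deriv f t * zbK z t = z * (f z - f 0) := by
  have hind : ∀ a b : ℝ, Integrable ((Set.Ico a b).indicator (deriv f)) := by
    intro a b
    rw [integrable_indicator_iff measurableSet_Ico]
    refine Measure.integrableOn_of_bounded ?_ (measurable_deriv f).aestronglyMeasurable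
      (M := (K : ℝ)) ?_
    · rw [Real.volume_Ico]; exact ENNReal.ofReal_ne_top
    · filter_upwards with t using by simpa [Real.norm_eq_abs] using lip_deriv_le hf t
  have hmul : ∀ t, deriv f t * zbK z t
      = z * ((Set.Ico (0:ℝ) z).indicator (deriv f) t
          - (Set.Ico z (0:ℝ)).indicator (deriv f) t) := by
    intro t
    show deriv f t * (z * ((Set.Ico (0:ℝ) z).indicator 1 t
      - (Set.Ico z (0:ℝ)).indicator 1 t)) = _
    by_cases h1 : t ∈ Set.Ico (0:ℝ) z <;> by_cases h2 : t ∈ Set.Ico z (0:ℝ) <;>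
      simp only [Set.indicator_of_mem, Set.indicator_of_notMem, h1, h2, Pi.one_apply,
        not_false_iff] <;> ring
  simp_rw [hmul]
  rw [integral_const_mul, integral_sub (hind 0 z) (hind z 0),
    integral_indicator measurableSet_Ico, integral_indicator measurableSet_Ico,
    Measure.restrict_congr_set Ico_ae_eq_Ioc, Measure.restrict_congr_set Ico_ae_eq_Ioc]
  rcases le_or_gt 0 z with hz | hz
  · rw [lipschitz_integral_deriv hf hz, Set.Ioc_eq_empty (by simpa using not_lt.2 hz)]
    simp
  · rw [lipschitz_integral_deriv hf hz.le, Set.Ioc_eq_empty (by simpa using not_lt.2 hz.le)]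
    simp only [Measure.restrict_empty, integral_zero_measure, zero_sub]
    ring

/-- Existence of the zero-bias transformation: for `z` with mean `0` and
variance `σ² > 0` (and finite third absolute moment), there is a distribution
`μ` (the law of `z*`) such that `E[z f(z)] = σ² E[f'(z*)]` for all Lipschitz `f`. -/
theorem zero_bias_distribution_exists
    {Ω : Type*} [MeasureSpace Ω] [IsProbabilityMeasure (ℙ : Measure Ω)]
    (Z : Ω → ℝ) (hZ : Measurable Z) (σ : ℝ) (hσ : 0 < σ)
    (hmean : ∫ ω, Z ω ∂ℙ = 0) (hvar : ∫ ω, Z ω ^ 2 ∂ℙ = σ ^ 2)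
    (hthird : Integrable (fun ω => |Z ω| ^ 3) ℙ) :
    ∃ μ : Measure ℝ, IsProbabilityMeasure μ ∧
      ∀ (f : ℝ → ℝ) (K : NNReal), LipschitzWith K f →
        ∫ ω, Z ω * f (Z ω) ∂ℙ = σ ^ 2 * ∫ t, deriv f t ∂μ := by
  have hσ2 : (0:ℝ) < σ ^ 2 := pow_pos hσ 2
  have hZ2 : Integrable (fun ω => Z ω ^ 2) ℙ := by
    by_contra h
    rw [integral_undef h] at hvar
    exact absurd hvar.symm (ne_of_gt hσ2)
  have hZ1 : Integrable Z ℙ := by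
    refine (hZ2.add (integrable_const 1)).mono' hZ.aestronglyMeasurable ?_
    filter_upwards with ω
    simp only [Real.norm_eq_abs, Pi.add_apply]
    nlinarith [sq_nonneg (|Z ω| - 1), sq_abs (Z ω), abs_nonneg (Z ω)]
  -- the kernel on the product space
  set F : ℝ × Ω → ℝ := fun p => zbK (Z p.2) p.1 with hFdef
  have hFmeas : Measurable F := by
    have key : ∀ (c : ℝ) (W : Ω → ℝ), Measurable W →
        Measurable fun p : ℝ × Ω => (Set.Ico c (W p.2)).indicator (1 : ℝ → ℝ) p.1 := by
      intro c W hW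
      have : (fun p : ℝ × Ω => (Set.Ico c (W p.2)).indicator (1:ℝ→ℝ) p.1)
          = ({p : ℝ × Ω | c ≤ p.1} ∩ {p : ℝ × Ω | p.1 < W p.2}).indicator (fun _ => (1:ℝ)) := by
        funext p
        simp only [Set.indicator_apply, Set.mem_Ico, Set.mem_inter_iff, Set.mem_setOf_eq,
          Pi.one_apply]
      rw [this]
      exact measurable_const.indicator
        ((measurableSet_le measurable_const measurable_fst).inter
          (measurableSet_lt measurable_fst (hW.comp measurable_snd)))
    have key2 : ∀ (W : Ω → ℝ), Measurable W →
        Measurable fun p : ℝ × Ω => (Set.Ico (W p.2) (0:ℝ)).indicator (1 : ℝ → ℝ) p.1 := by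
      intro W hW
      have : (fun p : ℝ × Ω => (Set.Ico (W p.2) (0:ℝ)).indicator (1:ℝ→ℝ) p.1)
          = ({p : ℝ × Ω | W p.2 ≤ p.1} ∩ {p : ℝ × Ω | p.1 < 0}).indicator (fun _ => (1:ℝ)) := by
        funext p
        simp only [Set.indicator_apply, Set.mem_Ico, Set.mem_inter_iff, Set.mem_setOf_eq,
          Pi.one_apply]
      rw [this]
      exact measurable_const.indicator
        (((measurableSet_le (hW.comp measurable_snd) measurable_fst)).inter
          (measurableSet_lt measurable_fst measurable_const))
    exact (hZ.comp measurable_snd).mul ((key 0 Z hZ).sub (key2 Z hZ))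
  have hFnonneg : ∀ p : ℝ × Ω, 0 ≤ F p := fun p => zbK_nonneg _ _
  have hFnorm : ∀ p : ℝ × Ω, ‖F p‖ = F p := fun p => Real.norm_of_nonneg (hFnonneg p)
  have hFint : Integrable F (volume.prod ℙ) := by
    rw [integrable_prod_iff' hFmeas.aestronglyMeasurable]
    refine ⟨Filter.Eventually.of_forall fun ω => zbK_integrable (Z ω), ?_⟩
    have hnorm : ∀ ω, ∫ t, ‖F (t, ω)‖ = Z ω ^ 2 := by
      intro ω
      calc ∫ t, ‖F (t, ω)‖ = ∫ t, zbK (Z ω) t := by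
            congr 1; funext t; rw [hFnorm]
        _ = Z ω ^ 2 := zbK_integral _
    exact hZ2.congr (Filter.Eventually.of_forall fun ω => (hnorm ω).symm)
  set q : ℝ → ℝ := fun t => ∫ ω, F (t, ω) ∂ℙ with hqdef
  have hqmeas : StronglyMeasurable q := hFmeas.stronglyMeasurable.integral_prod_right'
  have hqnonneg : ∀ t, 0 ≤ q t := fun t => integral_nonneg fun ω => hFnonneg _
  have hqint : Integrable q volume := hFint.integral_prod_left
  have hunc : Integrable (Function.uncurry fun t (ω : Ω) => F (t, ω)) (volume.prod ℙ) := by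
    exact hFint
  have hqtot : ∫ t, q t = σ ^ 2 := by
    calc ∫ t, q t = ∫ t, ∫ ω, F (t, ω) ∂ℙ := rfl
      _ = ∫ ω, ∫ t, F (t, ω) ∂ℙ := integral_integral_swap hunc
      _ = ∫ ω, Z ω ^ 2 ∂ℙ := by
          congr 1; funext ω
          exact zbK_integral (Z ω)
      _ = σ ^ 2 := hvar
  refine ⟨volume.withDensity (fun t => ENNReal.ofReal (q t / σ ^ 2)), ?_, ?_⟩
  · constructor
    rw [withDensity_apply _ MeasurableSet.univ, Measure.restrict_univ,
      ← ofReal_integral_eq_lintegral_ofReal (hqint.div_const _)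
        (Filter.Eventually.of_forall fun t => div_nonneg (hqnonneg t) hσ2.le),
      integral_div, hqtot, div_self hσ2.ne']
    exact ENNReal.ofReal_one
  · intro f K hf
    have hdm : Measurable (deriv f) := measurable_deriv f
    have hfc : Continuous f := hf.continuous
    have hint1 : Integrable (fun ω => Z ω * (f (Z ω) - f 0)) ℙ := by
      refine (hZ2.const_mul (K : ℝ)).mono'
        ((hZ.mul ((hfc.measurable.comp hZ).sub measurable_const)).aestronglyMeasurable) ?_
      filter_upwards with ω
      have hl := hf.dist_le_mul (Z ω) 0
      rw [Real.dist_eq, Real.dist_eq, sub_zero] at hl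
      rw [Real.norm_eq_abs, abs_mul]
      calc |Z ω| * |f (Z ω) - f 0| ≤ |Z ω| * ((K : ℝ) * |Z ω|) :=
            mul_le_mul_of_nonneg_left hl (abs_nonneg _)
        _ = (K : ℝ) * Z ω ^ 2 := by rw [← sq_abs]; ring
    have hsplit : ∫ ω, Z ω * f (Z ω) ∂ℙ = ∫ ω, Z ω * (f (Z ω) - f 0) ∂ℙ := by
      have heq : (fun ω => Z ω * f (Z ω)) = fun ω => Z ω * (f (Z ω) - f 0) + f 0 * Z ω := by
        funext ω; ring
      rw [heq, integral_add hint1 (hZ1.const_mul (f 0)), integral_const_mul, hmean,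
        mul_zero, add_zero]
    have hG2meas : Measurable fun p : ℝ × Ω => deriv f p.1 * F p :=
      (hdm.comp measurable_fst).mul hFmeas
    have hG2int : Integrable (fun p : ℝ × Ω => deriv f p.1 * F p) (volume.prod ℙ) := by
      refine (hFint.norm.const_mul (K : ℝ)).mono' hG2meas.aestronglyMeasurable ?_
      filter_upwards with p
      rw [Real.norm_eq_abs, abs_mul, Real.norm_eq_abs]
      exact mul_le_mul_of_nonneg_right (lip_deriv_le hf p.1) (abs_nonneg _)
    have hunc2 : Integrable (Function.uncurry fun t (ω : Ω) => deriv f t * F (t, ω))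
        (volume.prod ℙ) := by
      exact hG2int
    have hmain : ∫ ω, Z ω * (f (Z ω) - f 0) ∂ℙ = ∫ t, deriv f t * q t := by
      calc ∫ ω, Z ω * (f (Z ω) - f 0) ∂ℙ = ∫ ω, ∫ t, deriv f t * F (t, ω) ∂ℙ := by
            congr 1; funext ω
            exact (zbK_deriv_integral hf (Z ω)).symm
        _ = ∫ t, ∫ ω, deriv f t * F (t, ω) ∂ℙ := (integral_integral_swap hunc2).symm
        _ = ∫ t, deriv f t * q t := by
            congr 1; funext t
            exact integral_const_mul _ _
    have hrhs : ∫ t, deriv f t ∂(volume.withDensity fun t => ENNReal.ofReal (q t / σ ^ 2))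
        = ∫ t, (q t / σ ^ 2) * deriv f t := by
      have hmeasd : Measurable fun t => (q t / σ ^ 2).toNNReal :=
        (hqmeas.measurable.div_const _).real_toNNReal
      rw [show (fun t => ENNReal.ofReal (q t / σ ^ 2))
          = fun t => (((q t / σ ^ 2).toNNReal : ℝ≥0) : ℝ≥0∞) from rfl,
        integral_withDensity_eq_integral_smul hmeasd]
      congr 1; funext t
      rw [NNReal.smul_def, smul_eq_mul, Real.coe_toNNReal _ (div_nonneg (hqnonneg t) hσ2.le)]
    rw [hsplit, hmain, hrhs, ← integral_const_mul]
    congr 1; funext t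
    field_simp
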